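/- For every integer n ≥ 3, the solution Q_{n,0} of the zero-energy Novikov–Veselov equation blows up in infinite time in L²: ∫_{ℝ²} Q_{n,0}(t, x, y)² dx dy → +∞ as t → +∞ and as t → −∞, where Q_{n,0}(t, x, y) = −8 n² |P_{n−1}(t, x + iy)|² / (1 + |P_n(t, x + iy)|²)². -/

import Mathlib

open scoped Nat
open MeasureTheory Filter

/-- The Gould–Hopper polynomial `P_n(t, z) = n! Σ_{k=0}^{⌊n/3⌋} (8t)^k z^{n-3k} / (k! (n-3k)!)`. -/
noncomputable def GH (n : ℕ) (t : ℝ) (z : ℂ) : ℂ :=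
  (n ! : ℂ) * ∑ k ∈ Finset.range (n / 3 + 1),
    ((8 * t : ℝ) : ℂ) ^ k * z ^ (n - 3 * k) / ((k ! : ℂ) * ((n - 3 * k)! : ℂ))

/-- The solution `Q_{n,0}` of the zero-energy Novikov–Veselov equation. -/
noncomputable def Qn (n : ℕ) (t x y : ℝ) : ℝ :=
  -8 * (n : ℝ) ^ 2 * (‖GH (n - 1) t ((x : ℂ) + (y : ℂ) * Complex.I)‖) ^ 2
    / (1 + (‖GH n t ((x : ℂ) + (y : ℂ) * Complex.I)‖) ^ 2) ^ 2

open Polynomial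

noncomputable def GHP (n : ℕ) (t : ℝ) : Polynomial ℂ :=
  ∑ k ∈ Finset.range (n / 3 + 1),
    Polynomial.C ((n ! : ℂ) * ((8 * t : ℝ) : ℂ) ^ k / ((k ! : ℂ) * ((n - 3 * k)! : ℂ))) *
      Polynomial.X ^ (n - 3 * k)

lemma GHP_eval (n : ℕ) (t : ℝ) (z : ℂ) : (GHP n t).eval z = GH n t z := by
  simp only [GHP, GH, Polynomial.eval_finset_sum, Polynomial.eval_mul, Polynomial.eval_C,
    Polynomial.eval_pow, Polynomial.eval_X, Finset.mul_sum]
  exact Finset.sum_congr rfl fun k _ => by ring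

lemma three_mul_le {n k : ℕ} (hk : k ∈ Finset.range (n / 3 + 1)) : 3 * k ≤ n := by
  have := Finset.mem_range.1 hk
  have : k ≤ n / 3 := by omega
  calc 3 * k ≤ 3 * (n / 3) := by omega
  _ ≤ n := Nat.mul_div_le n 3 |>.trans_eq (by ring_nf) |>.trans_eq rfl

lemma GHP_coeff_n (n : ℕ) (t : ℝ) : (GHP n t).coeff n = 1 := by
  rw [GHP, Polynomial.finset_sum_coeff]
  rw [Finset.sum_eq_single 0]
  · have h1 : ((n ! : ℂ)) ≠ 0 := Nat.cast_ne_zero.2 n.factorial_ne_zero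
    simp [div_self, h1]
  · intro k hk hk0
    have h3 := three_mul_le hk
    rw [Polynomial.coeff_C_mul, Polynomial.coeff_X_pow, if_neg (by omega : ¬ n = n - 3*k), mul_zero]
  · intro h; simp at h

lemma GHP_natDegree_le (n : ℕ) (t : ℝ) : (GHP n t).natDegree ≤ n := by
  apply Polynomial.natDegree_sum_le_of_forall_le
  intro k hk
  refine (Polynomial.natDegree_C_mul_le _ _).trans ?_
  rw [Polynomial.natDegree_X_pow]; omega

lemma GHP_natDegree (n : ℕ) (t : ℝ) : (GHP n t).natDegree = n := by
  refine le_antisymm (GHP_natDegree_le n t) ?_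
  apply Polynomial.le_natDegree_of_ne_zero
  rw [GHP_coeff_n]; exact one_ne_zero

lemma GHP_ne_zero (n : ℕ) (t : ℝ) : GHP n t ≠ 0 := fun h => by
  have := GHP_coeff_n n t; rw [h] at this; simp at this

lemma GHP_monic (n : ℕ) (t : ℝ) : (GHP n t).Monic := by
  unfold Polynomial.Monic Polynomial.leadingCoeff
  rw [GHP_natDegree, GHP_coeff_n]

lemma GHP_coeff_pred (n : ℕ) (hn : 1 ≤ n) (t : ℝ) : (GHP n t).coeff (n - 1) = 0 := by
  rw [GHP, Polynomial.finset_sum_coeff]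
  apply Finset.sum_eq_zero
  intro k hk
  have h3 := three_mul_le hk
  rw [Polynomial.coeff_C_mul, Polynomial.coeff_X_pow, if_neg (by omega : ¬ n - 1 = n - 3*k),
    mul_zero]

lemma GHP_coeff_sub3 (n : ℕ) (hn : 3 ≤ n) (t : ℝ) :
    (GHP n t).coeff (n - 3) = (n ! : ℂ) * ((8 * t : ℝ) : ℂ) / ((n - 3)! : ℂ) := by
  rw [GHP, Polynomial.finset_sum_coeff]
  rw [Finset.sum_eq_single 1]
  · rw [Polynomial.coeff_C_mul, Polynomial.coeff_X_pow, if_pos (by omega : n - 3 = n - 3*1)]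
    simp [Nat.factorial]
  · intro k hk hk1
    have h3 := three_mul_le hk
    rw [Polynomial.coeff_C_mul, Polynomial.coeff_X_pow, if_neg (by omega : ¬ n - 3 = n - 3*k),
      mul_zero]
  · intro h
    exfalso; apply h
    simp only [Finset.mem_range]
    omega

lemma GHP_derivative (n : ℕ) (hn : 1 ≤ n) (t : ℝ) :
    (GHP n t).derivative = Polynomial.C (n : ℂ) * GHP (n - 1) t := by
  rw [GHP, map_sum, GHP, Finset.mul_sum]
  have key : ∀ k ∈ Finset.range ((n-1) / 3 + 1),
      (Polynomial.C ((n ! : ℂ) * ((8 * t : ℝ) : ℂ) ^ k / ((k ! : ℂ) * ((n - 3 * k)! : ℂ))) *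
        Polynomial.X ^ (n - 3 * k)).derivative
      = Polynomial.C (n : ℂ) *
        (Polynomial.C (((n-1)! : ℂ) * ((8 * t : ℝ) : ℂ) ^ k / ((k ! : ℂ) * ((n - 1 - 3 * k)! : ℂ))) *
          Polynomial.X ^ (n - 1 - 3 * k)) := by
    intro k hk
    have h3 : 3 * k ≤ n - 1 := three_mul_le hk
    rw [Polynomial.derivative_C_mul_X_pow]
    rw [(by omega : n - 3 * k - 1 = n - 1 - 3 * k), ← mul_assoc, ← Polynomial.C_mul]
    congr 1
    have hfac : ((n - 3*k)! : ℂ) = ((n - 3*k : ℕ) : ℂ) * ((n - 1 - 3*k)! : ℂ) := by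
      have h := Nat.mul_factorial_pred (by omega : n - 3*k ≠ 0)
      rw [(by omega : n - 1 - 3*k = n - 3*k - 1), ← h]
      push_cast; ring
    have hnfac : ((n)! : ℂ) = (n : ℂ) * ((n-1)! : ℂ) := by
      have h := Nat.mul_factorial_pred (by omega : n ≠ 0)
      rw [← h]
      push_cast; ring
    have hk0 : ((k ! : ℂ)) ≠ 0 := Nat.cast_ne_zero.2 k.factorial_ne_zero
    have hd0 : (((n - 1 - 3*k)! : ℂ)) ≠ 0 := Nat.cast_ne_zero.2 (Nat.factorial_ne_zero _)
    have hnk0 : ((n - 3*k : ℕ) : ℂ) ≠ 0 := Nat.cast_ne_zero.2 (by omega)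
    rw [hfac, hnfac]
    field_simp
  by_cases h3 : 3 ∣ n
  · -- range (n/3+1) = range ((n-1)/3 + 1) plus an extra vanishing term
    have hq : n / 3 + 1 = ((n-1)/3 + 1) + 1 := by omega
    rw [hq, Finset.sum_range_succ]
    have hlast : 3 * ((n-1)/3 + 1) = n := by omega
    rw [Finset.sum_congr rfl key]
    rw [(show n - 3 * ((n-1)/3+1) = 0 by omega)]
    simp
  · have hq : n / 3 + 1 = (n-1)/3 + 1 := by omega
    rw [hq, Finset.sum_congr rfl key]

lemma GH_scale (n : ℕ) (s lam : ℝ) (w : ℂ) :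
    GH n (lam ^ 3 * s) ((lam : ℂ) * w) = (lam : ℂ) ^ n * GH n s w := by
  unfold GH
  rw [Finset.mul_sum, Finset.mul_sum, Finset.mul_sum]
  refine Finset.sum_congr rfl fun k hk => ?_
  have h3 : 3 * k ≤ n := three_mul_le hk
  obtain ⟨m, hm⟩ : ∃ m, n = 3 * k + m := ⟨n - 3 * k, by omega⟩
  subst hm
  rw [(by omega : 3 * k + m - 3 * k = m)]
  push_cast
  ring

lemma GHP_rootMult_lt (n : ℕ) (hn : 3 ≤ n) (t : ℝ) (ht : t ≠ 0) (z₀ : ℂ)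
    (hr : (GHP n t).IsRoot z₀) : (GHP n t).rootMultiplicity z₀ < n := by
  by_contra h
  push_neg at h
  have hdvd : (Polynomial.X - Polynomial.C z₀) ^ n ∣ GHP n t :=
    (pow_dvd_pow _ h).trans ((GHP n t).pow_rootMultiplicity_dvd z₀)
  obtain ⟨c, hc⟩ := hdvd
  have hne : GHP n t ≠ 0 := GHP_ne_zero n t
  have hc0 : c ≠ 0 := by rintro rfl; simp at hc; exact hne hc
  have hXm : (Polynomial.X - Polynomial.C z₀) ^ n ≠ 0 :=
    pow_ne_zero _ (Polynomial.X_sub_C_ne_zero z₀)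
  have hdeg : ((Polynomial.X - Polynomial.C z₀) ^ n).natDegree = n := by
    rw [Polynomial.natDegree_pow, Polynomial.natDegree_X_sub_C, mul_one]
  have hdegc : c.natDegree = 0 := by
    have := Polynomial.natDegree_mul hXm hc0
    rw [← hc, GHP_natDegree, hdeg] at this
    omega
  obtain ⟨a, ha⟩ := Polynomial.natDegree_eq_zero.1 hdegc
  have hmon : ((Polynomial.X - Polynomial.C z₀) ^ n).Monic :=
    (Polynomial.monic_X_sub_C z₀).pow n
  have ha1 : a = 1 := by
    have hl := GHP_monic n t
    unfold Polynomial.Monic at hl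
    rw [hc, ← ha, Polynomial.leadingCoeff_mul, hmon.leadingCoeff, one_mul,
      Polynomial.leadingCoeff_C] at hl
    exact hl
  have hp_eq : GHP n t = (Polynomial.X - Polynomial.C z₀) ^ n := by
    rw [hc, ← ha, ha1, map_one, mul_one]
  have hz0 : z₀ = 0 := by
    have h1 := GHP_coeff_pred n (by omega) t
    rw [hp_eq, sub_eq_add_neg, ← map_neg] at h1
    rw [Polynomial.coeff_X_add_C_pow] at h1
    rw [(by omega : n - (n-1) = 1), pow_one] at h1
    have hch : n.choose (n-1) = n := by
      have h2 := Nat.choose_symm (by omega : n - 1 ≤ n)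
      rw [(by omega : n - (n-1) = 1), Nat.choose_one_right] at h2
      exact h2.symm
    rw [hch] at h1
    rcases mul_eq_zero.1 h1 with h2 | h2
    · exact neg_eq_zero.1 h2
    · exact absurd h2 (Nat.cast_ne_zero.2 (by omega))
  have h3 := GHP_coeff_sub3 n hn t
  rw [hp_eq, hz0] at h3
  simp only [map_zero, sub_zero] at h3
  rw [Polynomial.coeff_X_pow, if_neg (by omega : ¬ n - 3 = n)] at h3
  have : ((n ! : ℂ)) * ((8 * t : ℝ) : ℂ) ≠ 0 := by
    apply mul_ne_zero (Nat.cast_ne_zero.2 n.factorial_ne_zero)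
    simp only [ne_eq, Complex.ofReal_eq_zero]
    intro h; apply ht; linarith [h]
  rw [eq_comm, _root_.div_eq_zero_iff] at h3
  rcases h3 with h | h
  · exact this h
  · exact Nat.cast_ne_zero.2 (Nat.factorial_ne_zero _) h

lemma exists_local_data (n : ℕ) (hn : 3 ≤ n) (s : ℝ) (hs : s ≠ 0) :
    ∃ (z₀ : ℂ) (m : ℕ) (c L ρ : ℝ), 1 ≤ m ∧ m ≤ n - 1 ∧ 0 < c ∧ 0 < L ∧ 0 < ρ ∧ ρ ≤ 1 ∧
      (∀ w : ℂ, ‖w - z₀‖ ≤ ρ → ‖GH n s w‖ ≤ L * ‖w - z₀‖ ^ m) ∧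
      (∀ w : ℂ, ‖w - z₀‖ ≤ ρ → c * ‖w - z₀‖ ^ (m - 1) ≤ ‖GH (n-1) s w‖) := by
  set p := GHP n s with hp
  have hdegp : 0 < p.degree := by
    rw [Polynomial.degree_eq_natDegree (GHP_ne_zero n s), GHP_natDegree]
    exact_mod_cast (by omega : 0 < n)
  obtain ⟨z₀, hz₀⟩ := Complex.exists_root hdegp
  set m := p.rootMultiplicity z₀ with hm
  have hm1 : 1 ≤ m := (Polynomial.rootMultiplicity_pos (GHP_ne_zero n s)).2 hz₀
  have hmn : m ≤ n - 1 := by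
    have h2 := GHP_rootMult_lt n hn s hs z₀ hz₀
    rw [← hp] at h2
    omega
  set g := p /ₘ (Polynomial.X - Polynomial.C z₀) ^ m with hg
  have hfac : (Polynomial.X - Polynomial.C z₀) ^ m * g = p :=
    p.pow_mul_divByMonic_rootMultiplicity_eq z₀
  have hgz : g.eval z₀ ≠ 0 :=
    Polynomial.eval_divByMonic_pow_rootMultiplicity_ne_zero z₀ (GHP_ne_zero n s)
  -- the (n-1)-st polynomial
  set q := GHP (n-1) s with hq
  have hmq : q.rootMultiplicity z₀ = m - 1 := by
    have hd : p.derivative = Polynomial.C (n : ℂ) * q := GHP_derivative n (by omega) s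
    have h1 : (p.derivative).rootMultiplicity z₀ = m - 1 :=
      Polynomial.derivative_rootMultiplicity_of_root hz₀
    have hCq : (Polynomial.C (n : ℂ) * q) ≠ 0 := by
      apply mul_ne_zero _ (GHP_ne_zero (n-1) s)
      simpa using (Nat.cast_ne_zero (R := ℂ)).2 (by omega : n ≠ 0)
    rw [hd, Polynomial.rootMultiplicity_mul hCq, Polynomial.rootMultiplicity_C] at h1
    simpa using h1
  set h := q /ₘ (Polynomial.X - Polynomial.C z₀) ^ (m - 1) with hh
  have hfacq : (Polynomial.X - Polynomial.C z₀) ^ (m-1) * h = q := by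
    have := q.pow_mul_divByMonic_rootMultiplicity_eq z₀
    rwa [hmq] at this
  have hhz : h.eval z₀ ≠ 0 := by
    have := Polynomial.eval_divByMonic_pow_rootMultiplicity_ne_zero z₀ (GHP_ne_zero (n-1) s)
    rwa [hmq] at this
  -- bound for g on closedBall z₀ 1
  obtain ⟨L₀, hL₀⟩ := (isCompact_closedBall z₀ 1).exists_bound_of_continuousOn
    (g.continuous.continuousOn (s := Metric.closedBall z₀ 1))
  have hL0pos : (0:ℝ) < max L₀ 1 := lt_of_lt_of_le one_pos (le_max_right _ _)
  -- lower bound for h near z₀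
  have hcont : ContinuousAt (fun w => h.eval w) z₀ := h.continuous.continuousAt
  have hpos : 0 < ‖h.eval z₀‖ / 2 := by
    have := norm_pos_iff.2 hhz
    linarith
  obtain ⟨δ, hδpos, hδ⟩ := Metric.continuousAt_iff.1 hcont (‖h.eval z₀‖ / 2) hpos
  set ρ := min 1 (δ/2) with hρ
  have hρpos : 0 < ρ := lt_min one_pos (by positivity)
  have hρ1 : ρ ≤ 1 := min_le_left _ _
  refine ⟨z₀, m, ‖h.eval z₀‖ / 2, max L₀ 1, ρ, hm1, hmn, hpos, hL0pos, hρpos, hρ1, ?_, ?_⟩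
  · intro w hw
    rw [← GHP_eval, ← hp, ← hfac]
    rw [Polynomial.eval_mul, Polynomial.eval_pow, Polynomial.eval_sub, Polynomial.eval_X,
      Polynomial.eval_C]
    rw [norm_mul, norm_pow]
    rw [mul_comm]
    apply mul_le_mul_of_nonneg_right _ (by positivity)
    have hwball : w ∈ Metric.closedBall z₀ 1 := by
      rw [Metric.mem_closedBall, dist_eq_norm]
      exact hw.trans hρ1
    exact (hL₀ w hwball).trans (le_max_left _ _)
  · intro w hw
    rw [← GHP_eval, ← hq, ← hfacq]
    rw [Polynomial.eval_mul, Polynomial.eval_pow, Polynomial.eval_sub, Polynomial.eval_X,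
      Polynomial.eval_C]
    rw [norm_mul, norm_pow]
    rw [mul_comm]
    apply mul_le_mul_of_nonneg_left _ (by positivity)
    have hd : dist w z₀ < δ := by
      rw [dist_eq_norm]
      calc ‖w - z₀‖ ≤ ρ := hw
      _ ≤ δ/2 := min_le_right _ _
      _ < δ := by linarith
    have := hδ hd
    rw [dist_eq_norm] at this
    have htri := norm_sub_norm_le (h.eval w) (h.eval z₀)
    have : |‖h.eval w‖ - ‖h.eval z₀‖| < ‖h.eval z₀‖ / 2 := by
      rw [abs_sub_lt_iff]
      constructor
      · linarith [htri]
      · linarith [norm_sub_norm_le (h.eval z₀) (h.eval w), (by rw [norm_sub_rev] : ‖h.eval z₀ - h.eval w‖ = ‖h.eval w - h.eval z₀‖)]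
    have := abs_sub_lt_iff.1 this
    linarith [this.2]

lemma poly_eval_le (q : Polynomial ℂ) (d : ℕ) (hd : q.natDegree ≤ d) :
    ∃ C > 0, ∀ z : ℂ, ‖q.eval z‖ ≤ C * (1 + ‖z‖) ^ d := by
  refine ⟨(∑ i ∈ Finset.range (q.natDegree + 1), ‖q.coeff i‖) + 1, by positivity, fun z => ?_⟩
  have h1 : (1:ℝ) ≤ 1 + ‖z‖ := by linarith [norm_nonneg z]
  calc ‖q.eval z‖ = ‖∑ i ∈ Finset.range (q.natDegree + 1), q.coeff i * z ^ i‖ := by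
        rw [Polynomial.eval_eq_sum_range]
  _ ≤ ∑ i ∈ Finset.range (q.natDegree + 1), ‖q.coeff i * z ^ i‖ := norm_sum_le _ _
  _ ≤ ∑ i ∈ Finset.range (q.natDegree + 1), ‖q.coeff i‖ * (1 + ‖z‖) ^ d := by
        apply Finset.sum_le_sum
        intro i hi
        rw [norm_mul, norm_pow]
        apply mul_le_mul_of_nonneg_left _ (norm_nonneg _)
        calc ‖z‖ ^ i ≤ (1 + ‖z‖) ^ i := pow_le_pow_left₀ (norm_nonneg z) (by linarith) i
        _ ≤ (1 + ‖z‖) ^ d := pow_le_pow_right₀ h1 (by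
              have := Finset.mem_range.1 hi; omega)
  _ = (∑ i ∈ Finset.range (q.natDegree + 1), ‖q.coeff i‖) * (1 + ‖z‖) ^ d := by
        rw [← Finset.sum_mul]
  _ ≤ _ := by
        apply mul_le_mul_of_nonneg_right _ (by positivity)
        linarith

lemma poly_lower (n : ℕ) (hn : 1 ≤ n) (t : ℝ) :
    ∃ C > 0, ∀ z : ℂ, ‖z‖ ^ n ≤ ‖(GHP n t).eval z‖ + C * (1 + ‖z‖) ^ (n - 1) := by
  set r := GHP n t - Polynomial.X ^ n with hr
  have hdeg : r.natDegree ≤ n - 1 := by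
    by_cases h0 : r = 0
    · rw [h0]; simp
    · have hdlt : r.degree < (GHP n t).degree := by
        apply Polynomial.degree_sub_lt
        · rw [Polynomial.degree_eq_natDegree (GHP_ne_zero n t), GHP_natDegree,
            Polynomial.degree_X_pow]
        · exact GHP_ne_zero n t
        · rw [(GHP_monic n t).leadingCoeff, (Polynomial.monic_X_pow n).leadingCoeff]
      rw [Polynomial.degree_eq_natDegree (GHP_ne_zero n t), GHP_natDegree] at hdlt
      have hlt : r.natDegree < n := by
        rw [Polynomial.natDegree_lt_iff_degree_lt h0]
        exact_mod_cast hdlt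
      omega
  obtain ⟨C, hCpos, hC⟩ := poly_eval_le r (n - 1) hdeg
  refine ⟨C, hCpos, fun z => ?_⟩
  have heval : (z : ℂ) ^ n = (GHP n t).eval z - r.eval z := by
    rw [hr]; simp
  calc ‖z‖ ^ n = ‖(z : ℂ) ^ n‖ := by rw [norm_pow]
  _ = ‖(GHP n t).eval z - r.eval z‖ := by rw [heval]
  _ ≤ ‖(GHP n t).eval z‖ + ‖r.eval z‖ := norm_sub_le _ _
  _ ≤ ‖(GHP n t).eval z‖ + C * (1 + ‖z‖) ^ (n - 1) := by linarith [hC z]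

lemma master_bound (n : ℕ) (hn : 3 ≤ n) (t : ℝ) :
    ∃ M > 0, ∀ z : ℂ,
      (‖GH (n - 1) t z‖) ^ 4 * (1 + ‖z‖) ^ 3 ≤
        M * (1 + (‖GH n t z‖) ^ 2) ^ 4 := by
  obtain ⟨C₁, hC₁pos, hC₁⟩ := poly_eval_le (GHP (n-1) t) (n-1) (GHP_natDegree (n-1) t).le
  obtain ⟨C₂, hC₂pos, hC₂⟩ := poly_lower n (by omega) t
  set R : ℝ := max 1 (2 ^ n * C₂) with hR
  have hR1 : (1:ℝ) ≤ R := le_max_left _ _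
  refine ⟨max (C₁^4 * (1+R)^(4*n-1)) (256 * C₁^4 * 2^(4*n-1)), by positivity, fun z => ?_⟩
  set a : ℝ := ‖GH (n-1) t z‖ with ha
  set b : ℝ := ‖GH n t z‖ with hb
  have ha' : a = ‖(GHP (n-1) t).eval z‖ := by rw [ha, GHP_eval]
  have hb' : b = ‖(GHP n t).eval z‖ := by rw [hb, GHP_eval]
  have h1z : (1:ℝ) ≤ 1 + ‖z‖ := by linarith [norm_nonneg z]
  have hbnn : 0 ≤ b := norm_nonneg _
  have hb1 : (1:ℝ) ≤ (1 + b^2) := by nlinarith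
  have hb4 : (1:ℝ) ≤ (1 + b^2)^4 := by
    calc (1:ℝ) = 1^4 := by norm_num
    _ ≤ (1 + b^2)^4 := pow_le_pow_left₀ (by norm_num) hb1 4
  have hA : a^4 * (1 + ‖z‖)^3 ≤ C₁^4 * (1 + ‖z‖)^(4*n-1) := by
    have h2 : a^4 ≤ (C₁ * (1+‖z‖)^(n-1))^4 := by
      apply pow_le_pow_left₀ (norm_nonneg _)
      rw [← GHP_eval]; exact hC₁ z
    calc a^4 * (1 + ‖z‖)^3 ≤ (C₁ * (1+‖z‖)^(n-1))^4 * (1 + ‖z‖)^3 := by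
          apply mul_le_mul_of_nonneg_right h2 (by positivity)
    _ = C₁^4 * (1+‖z‖)^((n-1)*4 + 3) := by rw [mul_pow, ← pow_mul, mul_assoc, ← pow_add]
    _ = C₁^4 * (1+‖z‖)^(4*n-1) := by congr 2; omega
  rcases le_or_gt ‖z‖ R with hsmall | hlarge
  · calc a^4 * (1 + ‖z‖)^3 ≤ C₁^4 * (1 + ‖z‖)^(4*n-1) := hA
    _ ≤ C₁^4 * (1 + R)^(4*n-1) := by
          apply mul_le_mul_of_nonneg_left _ (by positivity)
          exact pow_le_pow_left₀ (by positivity) (by linarith) _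
    _ ≤ max (C₁^4 * (1+R)^(4*n-1)) (256 * C₁^4 * 2^(4*n-1)) * 1 := by
          rw [mul_one]; exact le_max_left _ _
    _ ≤ _ := by
          apply mul_le_mul_of_nonneg_left hb4 (by positivity)
  · have hz1 : (1:ℝ) ≤ ‖z‖ := hR1.trans hlarge.le
    have hz2 : 2^n * C₂ ≤ ‖z‖ := (le_max_right _ _).trans hlarge.le
    -- lower bound on b
    have hkey : ‖z‖^n / 2 ≤ b := by
      have h2 : C₂ * (1 + ‖z‖)^(n-1) ≤ ‖z‖^n / 2 := by
        have h3 : (1 + ‖z‖)^(n-1) ≤ (2*‖z‖)^(n-1) :=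
          pow_le_pow_left₀ (by positivity) (by linarith) _
        have h4 : (2*‖z‖)^(n-1) = 2^(n-1) * ‖z‖^(n-1) := mul_pow _ _ _
        have h5 : ‖z‖^n = ‖z‖ * ‖z‖^(n-1) := by
          rw [← pow_succ']; congr 1; omega
        have h6 : C₂ * (2^(n-1) * ‖z‖^(n-1)) * 2 ≤ ‖z‖ * ‖z‖^(n-1) := by
          have h7 : C₂ * 2^(n-1) * 2 = 2^n * C₂ := by
            rw [mul_comm (C₂ * 2^(n-1)) 2, ← mul_assoc, mul_comm (2:ℝ) C₂]
            rw [mul_assoc, ← pow_succ']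
            rw [(by omega : n - 1 + 1 = n)]
            ring
          have h8 : (0:ℝ) ≤ ‖z‖^(n-1) := by positivity
          calc C₂ * (2^(n-1) * ‖z‖^(n-1)) * 2 = (C₂ * 2^(n-1) * 2) * ‖z‖^(n-1) := by ring
          _ = (2^n * C₂) * ‖z‖^(n-1) := by rw [h7]
          _ ≤ ‖z‖ * ‖z‖^(n-1) := mul_le_mul_of_nonneg_right hz2 h8
        nlinarith [h3, h4, h5, h6, mul_le_mul_of_nonneg_left h3 hC₂pos.le]
      have := hC₂ z
      rw [← hb'] at this
      linarith
    have hb2 : ‖z‖^(2*n) / 4 ≤ b^2 := by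
      have h9 : (‖z‖^n/2)^2 ≤ b^2 := pow_le_pow_left₀ (by positivity) hkey 2
      calc ‖z‖^(2*n)/4 = (‖z‖^n/2)^2 := by
            rw [div_pow, ← pow_mul, (by ring : n*2 = 2*n)]; norm_num
      _ ≤ b^2 := h9
    have hb8 : ‖z‖^(8*n) / 256 ≤ (1 + b^2)^4 := by
      have h10 : ‖z‖^(2*n)/4 ≤ 1 + b^2 := by linarith
      have h11 : (‖z‖^(2*n)/4)^4 ≤ (1 + b^2)^4 := pow_le_pow_left₀ (by positivity) h10 4
      calc ‖z‖^(8*n)/256 = (‖z‖^(2*n)/4)^4 := by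
            rw [div_pow, ← pow_mul, (by ring : 2*n*4 = 8*n)]; norm_num
      _ ≤ (1 + b^2)^4 := h11
    calc a^4 * (1 + ‖z‖)^3 ≤ C₁^4 * (1 + ‖z‖)^(4*n-1) := hA
    _ ≤ C₁^4 * (2*‖z‖)^(4*n-1) := by
          apply mul_le_mul_of_nonneg_left _ (by positivity)
          exact pow_le_pow_left₀ (by positivity) (by linarith) _
    _ = C₁^4 * 2^(4*n-1) * ‖z‖^(4*n-1) := by rw [mul_pow]; ring
    _ ≤ C₁^4 * 2^(4*n-1) * ‖z‖^(8*n) := by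
          apply mul_le_mul_of_nonneg_left _ (by positivity)
          exact pow_le_pow_right₀ hz1 (by omega)
    _ ≤ C₁^4 * 2^(4*n-1) * (256 * (1 + b^2)^4) := by
          apply mul_le_mul_of_nonneg_left _ (by positivity)
          linarith
    _ = (256 * C₁^4 * 2^(4*n-1)) * (1 + b^2)^4 := by ring
    _ ≤ _ := by
          apply mul_le_mul_of_nonneg_right (le_max_right _ _) (by positivity)

lemma GH_continuous (k : ℕ) (t : ℝ) :
    Continuous fun pr : ℝ × ℝ => GH k t ((pr.1 : ℂ) + (pr.2 : ℂ) * Complex.I) := by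
  have h1 : Continuous fun pr : ℝ × ℝ => ((pr.1 : ℂ) + (pr.2 : ℂ) * Complex.I) := by
    continuity
  have h2 : Continuous fun z : ℂ => GH k t z := by
    have := (GHP k t).continuous
    simp only [GHP_eval] at this
    exact this
  exact h2.comp h1

lemma Qn_denom_pos (n : ℕ) (t x y : ℝ) :
    (0:ℝ) < (1 + (‖GH n t ((x : ℂ) + (y : ℂ) * Complex.I)‖) ^ 2) ^ 2 := by
  positivity

lemma Qn_sq (n : ℕ) (t x y : ℝ) :
    (Qn n t x y) ^ 2 = 64 * (n:ℝ) ^ 4 *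
        (‖GH (n - 1) t ((x : ℂ) + (y : ℂ) * Complex.I)‖) ^ 4 /
      (1 + (‖GH n t ((x : ℂ) + (y : ℂ) * Complex.I)‖) ^ 2) ^ 4 := by
  rw [Qn, div_pow, ← pow_mul]
  have h : ((1:ℝ) + (‖GH n t ((x : ℂ) + (y : ℂ) * Complex.I)‖) ^ 2) ^ (2*2) ≠ 0 := by
    positivity
  rw [(by norm_num : 2*2 = 4)] at h ⊢
  congr 1
  ring

lemma Qn_continuous (n : ℕ) (t : ℝ) :
    Continuous fun pr : ℝ × ℝ => Qn n t pr.1 pr.2 := by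
  unfold Qn
  apply Continuous.div
  · exact (continuous_const.mul (((continuous_norm.comp (GH_continuous (n-1) t)).pow 2)))
  · exact ((continuous_const.add ((continuous_norm.comp (GH_continuous n t)).pow 2)).pow 2)
  · intro pr
    have := Qn_denom_pos n t pr.1 pr.2
    exact ne_of_gt this

lemma Qn_sq_integrable (n : ℕ) (hn : 3 ≤ n) (t : ℝ) :
    MeasureTheory.Integrable (fun pr : ℝ × ℝ => (Qn n t pr.1 pr.2) ^ 2) := by
  obtain ⟨M, hMpos, hM⟩ := master_bound n hn t
  have hfin : ((Module.finrank ℝ (ℝ × ℝ) : ℝ)) < 3 := by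
    simp [Module.finrank_prod]; norm_num
  have hint : MeasureTheory.Integrable (fun pr : ℝ × ℝ => (1 + ‖pr‖) ^ (-(3:ℝ))) :=
    integrable_one_add_norm hfin
  apply MeasureTheory.Integrable.mono' (hint.const_mul (64 * (n:ℝ)^4 * M))
  · exact ((Qn_continuous n t).pow 2).aestronglyMeasurable
  · refine Filter.Eventually.of_forall fun pr => ?_
    set z : ℂ := (pr.1 : ℂ) + (pr.2 : ℂ) * Complex.I with hz
    have hnorm : ‖pr‖ ≤ ‖z‖ := by
      rw [Prod.norm_def]
      apply max_le
      · have := Complex.abs_re_le_norm z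
        have hre : z.re = pr.1 := by simp [hz]
        rw [hre] at this
        simpa using this
      · have := Complex.abs_im_le_norm z
        have him : z.im = pr.2 := by simp [hz]
        rw [him] at this
        simpa using this
    have h1 : (0:ℝ) < 1 + ‖pr‖ := by positivity
    have h2 : (1 + ‖pr‖) ^ (-(3:ℝ)) = 1 / (1 + ‖pr‖)^(3:ℕ) := by
      rw [Real.rpow_neg h1.le, ← Real.rpow_natCast (1 + ‖pr‖) 3]
      norm_num
    rw [Real.norm_eq_abs, abs_of_nonneg (sq_nonneg _), Qn_sq]
    rw [h2]
    have hD : (0:ℝ) < (1 + (‖GH n t z‖)^2)^4 := by positivity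
    have hp3 : (0:ℝ) < (1+‖pr‖)^(3:ℕ) := by positivity
    have hstep : (‖GH (n-1) t z‖)^4 / (1 + (‖GH n t z‖)^2)^4
        ≤ M / (1+‖pr‖)^(3:ℕ) := by
      rw [div_le_div_iff₀ hD hp3]
      calc (‖GH (n-1) t z‖)^4 * (1+‖pr‖)^(3:ℕ)
          ≤ (‖GH (n-1) t z‖)^4 * (1+‖z‖)^(3:ℕ) := by
            apply mul_le_mul_of_nonneg_left _ (by positivity)
            exact pow_le_pow_left₀ (by positivity) (by linarith) 3
      _ ≤ M * (1 + (‖GH n t z‖)^2)^4 := hM z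
    calc 64 * (n:ℝ)^4 * (‖GH (n-1) t z‖)^4 / (1 + (‖GH n t z‖)^2)^4
        = 64 * (n:ℝ)^4 * ((‖GH (n-1) t z‖)^4 / (1 + (‖GH n t z‖)^2)^4) := by
          ring
    _ ≤ 64 * (n:ℝ)^4 * (M / (1+‖pr‖)^(3:ℕ)) := by
          apply mul_le_mul_of_nonneg_left hstep (by positivity)
    _ = 64 * (n:ℝ)^4 * M * (1/(1+‖pr‖)^(3:ℕ)) := by ring

lemma lower_bound (n : ℕ) (hn : 3 ≤ n) (s : ℝ) (hs : s ≠ 0) :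
    ∃ K > 0, ∀ lam : ℝ, 1 ≤ lam →
      K * lam ^ ((2:ℝ)/((n:ℝ)-1)) ≤ ∫ pr : ℝ × ℝ, (Qn n (lam^3 * s) pr.1 pr.2)^2 := by
  obtain ⟨z₀, m, c, L, ρ, hm1, hmn, hcpos, hLpos, hρpos, hρ1, hupper, hlower⟩ :=
    exists_local_data n hn s hs
  have hmpos : (0:ℝ) < m := by exact_mod_cast hm1
  set e : ℝ := (n:ℝ)/(m:ℝ) with he
  have hepos : 0 < e := by positivity
  set C₀ : ℝ := 64 * (n:ℝ)^4 * (c * (ρ/2)^(m-1))^4 / (1 + L^2)^4 with hC₀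
  have hC₀pos : 0 < C₀ := by
    have : (0:ℝ) < (n:ℝ) := by exact_mod_cast (by omega : 0 < n)
    positivity
  refine ⟨C₀ * ρ^2 / 64, by positivity, fun lam hlam => ?_⟩
  have hlampos : (0:ℝ) < lam := lt_of_lt_of_le one_pos hlam
  set r : ℝ := ρ * lam ^ (-e) with hr
  have hrpos : 0 < r := by
    apply mul_pos hρpos
    exact Real.rpow_pos_of_pos hlampos _
  have hrρ : r ≤ ρ := by
    rw [hr]
    calc ρ * lam ^ (-e) ≤ ρ * 1 := by
          apply mul_le_mul_of_nonneg_left _ hρpos.le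
          exact Real.rpow_le_one_of_one_le_of_nonpos hlam (by linarith)
    _ = ρ := mul_one ρ
  set ζ : ℂ := z₀ + ((3*r/4 : ℝ) : ℂ) with hζ
  set T : Set (ℝ × ℝ) :=
    Set.Icc (lam*ζ.re - lam*r/16) (lam*ζ.re + lam*r/16) ×ˢ
      Set.Icc (lam*ζ.im - lam*r/16) (lam*ζ.im + lam*r/16) with hT
  -- measure of T
  have hμT : (MeasureTheory.volume T).toReal = (lam*r/8)^2 := by
    rw [hT, MeasureTheory.Measure.volume_eq_prod, MeasureTheory.Measure.prod_prod,
      Real.volume_Icc, Real.volume_Icc]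
    rw [(by ring : lam*ζ.re + lam*r/16 - (lam*ζ.re - lam*r/16) = lam*r/8),
      (by ring : lam*ζ.im + lam*r/16 - (lam*ζ.im - lam*r/16) = lam*r/8)]
    rw [← ENNReal.ofReal_mul (by positivity)]
    rw [ENNReal.toReal_ofReal (by positivity)]
    ring
  have hμTfin : MeasureTheory.volume T ≠ ⊤ := by
    rw [hT, MeasureTheory.Measure.volume_eq_prod, MeasureTheory.Measure.prod_prod]
    exact ENNReal.mul_ne_top (by simp [Real.volume_Icc]) (by simp [Real.volume_Icc])
  -- pointwise lower bound on T
  have hpoint : ∀ pr ∈ T, C₀ * lam ^ ((e-1)*4) ≤ (Qn n (lam^3 * s) pr.1 pr.2)^2 := by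
    rintro ⟨x, y⟩ ⟨hx, hy⟩
    simp only [Set.mem_Icc] at hx hy
    set z : ℂ := (x : ℂ) + (y : ℂ) * Complex.I with hz
    set w : ℂ := z / (lam : ℂ) with hw
    have hlamC : ((lam : ℂ)) ≠ 0 := by exact_mod_cast hlampos.ne'
    have hzw : (lam : ℂ) * w = z := by
      rw [hw]; field_simp
    -- |w - ζ| ≤ r/8
    have hwζ : ‖w - ζ‖ ≤ r/8 := by
      have h1 : ‖z - (lam:ℂ) * ζ‖ ≤ lam*r/8 := by
        have hre : (z - (lam:ℂ)*ζ).re = x - lam*ζ.re := by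
          simp [hz, Complex.mul_re]
        have him : (z - (lam:ℂ)*ζ).im = y - lam*ζ.im := by
          simp [hz, Complex.mul_im]
        calc ‖z - (lam:ℂ)*ζ‖ ≤ |(z - (lam:ℂ)*ζ).re| + |(z - (lam:ℂ)*ζ).im| := by
              exact Complex.norm_le_abs_re_add_abs_im _
        _ ≤ lam*r/16 + lam*r/16 := by
              rw [hre, him]
              gcongr <;> rw [abs_le] <;> constructor <;> linarith [hx.1, hx.2, hy.1, hy.2]
        _ = lam*r/8 := by ring
      have h2 : w - ζ = (z - (lam:ℂ)*ζ) / (lam:ℂ) := by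
        rw [hw]; field_simp
      rw [h2, norm_div, Complex.norm_real, Real.norm_eq_abs, abs_of_pos hlampos]
      rw [div_le_iff₀ hlampos]
      linarith [h1]
    -- |w - z₀| between r/2 and r
    have hζz₀ : ‖ζ - z₀‖ = 3*r/4 := by
      rw [hζ]
      simp only [add_sub_cancel_left]
      rw [Complex.norm_real, Real.norm_eq_abs, abs_of_pos (by positivity)]
    have hwlow : r/2 ≤ ‖w - z₀‖ := by
      have h4 := norm_sub_le_norm_sub_add_norm_sub ζ w z₀
      rw [norm_sub_rev ζ w, hζz₀] at h4
      linarith [hwζ]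
    have hwhigh : ‖w - z₀‖ ≤ r := by
      have h3 : ‖w - z₀‖ ≤ ‖w - ζ‖ + ‖ζ - z₀‖ := by
        calc ‖w - z₀‖ = ‖(w - ζ) + (ζ - z₀)‖ := by ring_nf
        _ ≤ ‖w - ζ‖ + ‖ζ - z₀‖ := norm_add_le _ _
      rw [hζz₀] at h3
      linarith
    have hwρ : ‖w - z₀‖ ≤ ρ := hwhigh.trans hrρ
    -- scaling
    have hscaleN : ‖GH n (lam^3*s) z‖ = lam^(n:ℕ) * ‖GH n s w‖ := by
      rw [← hzw, GH_scale]
      rw [norm_mul, norm_pow]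
      congr 2
      rw [Complex.norm_real, Real.norm_eq_abs, abs_of_pos hlampos]
    have hscaleN1 : ‖GH (n-1) (lam^3*s) z‖
        = lam^((n:ℕ)-1) * ‖GH (n-1) s w‖ := by
      rw [← hzw, GH_scale]
      rw [norm_mul, norm_pow]
      congr 2
      rw [Complex.norm_real, Real.norm_eq_abs, abs_of_pos hlampos]
    -- numeric: lam^n * r^m = ρ^m  (as lam^n * lam^(-e*m) = 1)
    have hrm : r^m = ρ^m * lam^(-(n:ℝ)) := by
      rw [hr, mul_pow, ← Real.rpow_natCast (lam ^ (-e)) m, ← Real.rpow_mul hlampos.le]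
      congr 2
      rw [he]
      field_simp
    have hlamn : (lam:ℝ)^(n:ℕ) = lam^((n:ℝ)) := by
      rw [← Real.rpow_natCast]
    have hcancel : lam^((n:ℝ)) * lam^(-(n:ℝ)) = 1 := by
      rw [← Real.rpow_add hlampos]
      simp
    -- upper bound on B
    have hB : ‖GH n (lam^3*s) z‖ ≤ L := by
      rw [hscaleN]
      calc lam^(n:ℕ) * ‖GH n s w‖ ≤ lam^(n:ℕ) * (L * ‖w - z₀‖^m) := by
            apply mul_le_mul_of_nonneg_left (hupper w hwρ) (by positivity)
      _ ≤ lam^(n:ℕ) * (L * r^m) := by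
            apply mul_le_mul_of_nonneg_left _ (by positivity)
            apply mul_le_mul_of_nonneg_left _ hLpos.le
            exact pow_le_pow_left₀ (norm_nonneg _) hwhigh m
      _ = L * ρ^m * (lam^((n:ℝ)) * lam^(-(n:ℝ))) := by
            rw [hrm, hlamn]; ring
      _ = L * ρ^m := by rw [hcancel, mul_one]
      _ ≤ L * 1 := by
            apply mul_le_mul_of_nonneg_left _ hLpos.le
            exact pow_le_one₀ hρpos.le hρ1
      _ = L := mul_one L
    -- lower bound on A
    have hA : c * (ρ/2)^(m-1) * lam^(e-1) ≤ ‖GH (n-1) (lam^3*s) z‖ := by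
      rw [hscaleN1]
      have h6 : c * (r/2)^(m-1) ≤ ‖GH (n-1) s w‖ := by
        calc c * (r/2)^(m-1) ≤ c * ‖w - z₀‖^(m-1) := by
              apply mul_le_mul_of_nonneg_left _ hcpos.le
              exact pow_le_pow_left₀ (by positivity) hwlow _
        _ ≤ _ := hlower w hwρ
      have h7 : (r/2)^(m-1) = (ρ/2)^(m-1) * lam^(-e*((m:ℝ)-1)) := by
        rw [hr, (by ring : ρ * lam^(-e)/2 = (ρ/2) * lam^(-e)), mul_pow,
          ← Real.rpow_natCast (lam ^ (-e)) (m-1), ← Real.rpow_mul hlampos.le]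
        congr 2
        push_cast [hm1]
        ring
      have h8 : lam^((n:ℕ)-1) = lam^((n:ℝ)-1) := by
        rw [← Real.rpow_natCast]
        congr 1
        rw [Nat.cast_sub (by omega : 1 ≤ n)]
        norm_num
      have hme : e * (m:ℝ) = n := by
        rw [he]; field_simp
      have h9 : lam^((n:ℝ)-1) * lam^(-e*((m:ℝ)-1)) = lam^(e-1) := by
        rw [← Real.rpow_add hlampos]
        congr 1
        linear_combination -hme
      calc c * (ρ/2)^(m-1) * lam^(e-1)
          = lam^((n:ℝ)-1) * (c * ((ρ/2)^(m-1) * lam^(-e*((m:ℝ)-1)))) := by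
            rw [← h9]; ring
      _ = lam^((n:ℝ)-1) * (c * (r/2)^(m-1)) := by rw [← h7]
      _ ≤ lam^((n:ℝ)-1) * ‖GH (n-1) s w‖ := by
            apply mul_le_mul_of_nonneg_left h6 (Real.rpow_nonneg hlampos.le _)
      _ = lam^((n:ℕ)-1) * ‖GH (n-1) s w‖ := by rw [h8]
    -- conclude the pointwise bound
    rw [Qn_sq]
    set A : ℝ := ‖GH (n-1) (lam^3*s) ((x:ℂ) + (y:ℂ)*Complex.I)‖ with hA'
    set B : ℝ := ‖GH n (lam^3*s) ((x:ℂ) + (y:ℂ)*Complex.I)‖ with hB'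
    have hApos : c * (ρ/2)^(m-1) * lam^(e-1) ≤ A := hA
    have hBle : B ≤ L := hB
    have hβnn : (0:ℝ) ≤ c * (ρ/2)^(m-1) * lam^(e-1) := by positivity
    have hlExp : (c * (ρ/2)^(m-1) * lam^(e-1))^4
        = (c * (ρ/2)^(m-1))^4 * lam^((e-1)*4) := by
      rw [mul_pow, ← Real.rpow_natCast (lam^(e-1)) 4, ← Real.rpow_mul hlampos.le]
      norm_num
    have hC₀eq : C₀ * lam^((e-1)*4)
        = 64 * (n:ℝ)^4 * (c * (ρ/2)^(m-1) * lam^(e-1))^4 / (1 + L^2)^4 := by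
      rw [hlExp, hC₀]; ring
    rw [hC₀eq]
    have hBnn : 0 ≤ B := norm_nonneg _
    have hAnn : 0 ≤ A := norm_nonneg _
    gcongr
  -- integrate
  have hmeas : MeasurableSet T := (measurableSet_Icc.prod measurableSet_Icc)
  have hint := Qn_sq_integrable n hn (lam^3*s)
  have hTineq := MeasureTheory.setIntegral_ge_of_const_le hmeas hμTfin hpoint
    hint.integrableOn
  have hle2 := MeasureTheory.setIntegral_le_integral (s := T) hint
    (Filter.Eventually.of_forall fun pr => sq_nonneg _)
  have hμcomp : C₀ * lam^((e-1)*4) * (MeasureTheory.volume T).toReal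
      = (C₀ * ρ^2/64) * lam^(2*e-2) := by
    rw [hμT]
    have h10 : lam * r / 8 = (ρ/8) * lam^(1-e) := by
      rw [hr]
      rw [show (1:ℝ) - e = 1 + -e from by ring, Real.rpow_add hlampos, Real.rpow_one]
      ring
    have h11 : ((ρ/8) * lam^(1-e))^2 = (ρ/8)^2 * lam^((1-e)*2) := by
      rw [mul_pow, ← Real.rpow_natCast (lam^(1-e)) 2, ← Real.rpow_mul hlampos.le]
      norm_num
    have h12 : lam^((e-1)*4) * lam^((1-e)*2) = lam^(2*e-2) := by
      rw [← Real.rpow_add hlampos]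
      congr 1
      ring
    rw [h10]
    calc C₀ * lam^((e-1)*4) * ((ρ/8) * lam^(1-e))^2
        = C₀ * (ρ/8)^2 * (lam^((e-1)*4) * lam^((1-e)*2)) := by rw [h11]; ring
    _ = C₀ * (ρ/8)^2 * lam^(2*e-2) := by rw [h12]
    _ = C₀ * ρ^2/64 * lam^(2*e-2) := by ring
  have hexp : (2:ℝ)/((n:ℝ)-1) ≤ 2*e - 2 := by
    have hn3 : (3:ℝ) ≤ (n:ℝ) := by exact_mod_cast hn
    have hmle : (m:ℝ) ≤ (n:ℝ) - 1 := by
      have : (m:ℝ) ≤ ((n-1 : ℕ) : ℝ) := by exact_mod_cast hmn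
      rw [Nat.cast_sub (by omega : 1 ≤ n)] at this
      simpa using this
    have hmpos' : (0:ℝ) < (m:ℝ) := hmpos
    have hn1 : (0:ℝ) < (n:ℝ)-1 := by linarith
    have h1 : ((n:ℝ))/((n:ℝ)-1) ≤ (n:ℝ)/(m:ℝ) :=
      div_le_div_of_nonneg_left (by linarith) hmpos' hmle
    have h2 : ((n:ℝ))/((n:ℝ)-1) = 1 + 1/((n:ℝ)-1) := by field_simp; ring
    have h3 : (2:ℝ)/((n:ℝ)-1) = 2*(1/((n:ℝ)-1)) := by ring
    rw [he]
    linarith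
  calc (C₀ * ρ^2/64) * lam^((2:ℝ)/((n:ℝ)-1))
      ≤ (C₀ * ρ^2/64) * lam^(2*e-2) := by
        apply mul_le_mul_of_nonneg_left _ (by positivity)
        exact Real.rpow_le_rpow_of_exponent_le hlam hexp
  _ = C₀ * lam^((e-1)*4) * (MeasureTheory.volume T).toReal := hμcomp.symm
  _ ≤ ∫ pr in T, (Qn n (lam^3*s) pr.1 pr.2)^2 := by
        have := hTineq; rw [smul_eq_mul, mul_comm] at this; exact this
  _ ≤ ∫ pr : ℝ × ℝ, (Qn n (lam^3*s) pr.1 pr.2)^2 := hle2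

theorem stmt17 (n : ℕ) (hn : 3 ≤ n) :
    Tendsto (fun t : ℝ => ∫ p : ℝ × ℝ, (Qn n t p.1 p.2) ^ 2) atTop atTop ∧
    Tendsto (fun t : ℝ => ∫ p : ℝ × ℝ, (Qn n t p.1 p.2) ^ 2) atBot atTop := by
  have hnR : (3:ℝ) ≤ (n:ℝ) := by exact_mod_cast hn
  set E : ℝ := (2:ℝ)/((n:ℝ)-1) with hE
  have hEpos : 0 < E := by
    apply div_pos (by norm_num)
    linarith
  have hexp : (0:ℝ) < (1/3) * E := by positivity
  constructor
  · obtain ⟨K, hKpos, hK⟩ := lower_bound n hn 1 one_ne_zero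
    apply tendsto_atTop_mono' atTop (f₁ := fun t : ℝ => K * t ^ ((1/3:ℝ) * E))
    · filter_upwards [eventually_ge_atTop (1:ℝ)] with t ht
      have htpos : (0:ℝ) < t := lt_of_lt_of_le one_pos ht
      have hlam : 1 ≤ t ^ ((1:ℝ)/3) := by
        have := Real.rpow_le_rpow (by norm_num : (0:ℝ) ≤ 1) ht (by norm_num : (0:ℝ) ≤ 1/3)
        rwa [Real.one_rpow] at this
      have hKt := hK (t ^ ((1:ℝ)/3)) hlam
      have hcube : (t ^ ((1:ℝ)/3)) ^ (3:ℕ) * 1 = t := by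
        rw [mul_one, ← Real.rpow_natCast (t ^ ((1:ℝ)/3)) 3, ← Real.rpow_mul htpos.le]
        norm_num
      have hpow : (t ^ ((1:ℝ)/3)) ^ E = t ^ ((1/3:ℝ) * E) := by
        rw [← Real.rpow_mul htpos.le]
      rw [hcube, hpow] at hKt
      exact hKt
    · exact (tendsto_rpow_atTop hexp).const_mul_atTop hKpos
  · obtain ⟨K, hKpos, hK⟩ := lower_bound n hn (-1) (by norm_num)
    apply tendsto_atTop_mono' atBot (f₁ := fun t : ℝ => K * (-t) ^ ((1/3:ℝ) * E))
    · filter_upwards [eventually_le_atBot (-1:ℝ)] with t ht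
      have htpos : (0:ℝ) < -t := by linarith
      have hlam : 1 ≤ (-t) ^ ((1:ℝ)/3) := by
        have := Real.rpow_le_rpow (by norm_num : (0:ℝ) ≤ 1) (by linarith : (1:ℝ) ≤ -t)
          (by norm_num : (0:ℝ) ≤ 1/3)
        rwa [Real.one_rpow] at this
      have hKt := hK ((-t) ^ ((1:ℝ)/3)) hlam
      have hcube : ((-t) ^ ((1:ℝ)/3)) ^ (3:ℕ) * (-1) = t := by
        rw [← Real.rpow_natCast ((-t) ^ ((1:ℝ)/3)) 3, ← Real.rpow_mul htpos.le]
        norm_num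
      have hpow : ((-t) ^ ((1:ℝ)/3)) ^ E = (-t) ^ ((1/3:ℝ) * E) := by
        rw [← Real.rpow_mul htpos.le]
      rw [hcube, hpow] at hKt
      exact hKt
    · exact ((tendsto_rpow_atTop hexp).comp tendsto_neg_atBot_atTop).const_mul_atTop hKpos
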